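/- Let G be a graph with m edges, F a cycle of G, and f a Z2×Z2-flow on G with E(G) − E(F) ⊆ supp(f). Let C1 = E_{f=(0,1)}(G) ∪ E_{f=(1,0)}(G), C2 = E_{f=(0,1)}(G) ∪ E_{f=(1,1)}(G), and C3 = E_{f=(1,1)}(G) ∪ E_{f=(1,0)}(G). Then {C1 Δ F, C2 Δ F, C3 Δ F} (symmetric differences of edge sets) is a cycle cover of G of length exactly 2m − |E(F)| + 2|E_{f=(0,0)}(F)|: each edge of E(G) − E(F) is covered exactly twice, each edge of E(F) ∩ supp(f) exactly once, and each edge of E_{f=(0,0)}(F) exactly three times. -/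
import Mathlib


/-- A finite multigraph: loops and multiple edges are allowed.  Each edge is
assigned its (unordered) pair of endpoints. -/
structure Multigraph where
  V : Type
  E : Type
  finV : Finite V
  finE : Finite E
  ends : E → Sym2 V

attribute [instance] Multigraph.finV Multigraph.finE

namespace Multigraph

/-- A walk of length `n`: a sequence of `n+1` vertices and `n` edges, each edge
joining consecutive vertices. -/
structure Walk (G : Multigraph) (n : ℕ) where
  vtx : Fin (n + 1) → G.V
  edge : Fin n → G.E
  compat : ∀ i : Fin n, G.ends (edge i) = s(vtx i.castSucc, vtx i.succ)

variable (G : Multigraph)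

/-- The degree of a vertex (a loop counts twice). -/
noncomputable def degree (v : G.V) : ℕ :=
  Nat.card {e : G.E // v ∈ G.ends e ∧ ¬ (G.ends e).IsDiag} +
    2 * Nat.card {e : G.E // G.ends e = s(v, v)}

/-- The degree of a vertex in the subgraph with edge set `S` (a loop counts twice). -/
noncomputable def degIn (S : Set G.E) (v : G.V) : ℕ :=
  Nat.card {e : G.E // e ∈ S ∧ v ∈ G.ends e ∧ ¬ (G.ends e).IsDiag} +
    2 * Nat.card {e : G.E // e ∈ S ∧ G.ends e = s(v, v)}

/-- A cycle (identified with its edge set): every vertex has even degree. -/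
def IsCycle (S : Set G.E) : Prop := ∀ v : G.V, Even (G.degIn S v)

/-- `u` is joined to `w` by a path using only edges in `S`. -/
def Reaches (S : Set G.E) (u w : G.V) : Prop :=
  Relation.ReflTransGen (fun a b => ∃ e ∈ S, G.ends e = s(a, b)) u w

/-- A circuit (identified with its edge set): a connected `2`-regular subgraph. -/
def IsCircuit (S : Set G.E) : Prop :=
  S.Nonempty ∧
    (∀ v : G.V, (∃ e ∈ S, v ∈ G.ends e) → G.degIn S v = 2) ∧
    ∀ u w : G.V, (∃ e ∈ S, u ∈ G.ends e) → (∃ e ∈ S, w ∈ G.ends e) → G.Reaches S u w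

/-- A `ℤ₂×ℤ₂`-flow: at every vertex the values on the incident edges sum to zero
(a loop contributes its value twice, hence zero). -/
def IsFlow (f : G.E → ZMod 2 × ZMod 2) : Prop :=
  ∀ v : G.V, ∑ᶠ e ∈ {e : G.E | v ∈ G.ends e ∧ ¬ (G.ends e).IsDiag}, f e = 0

/-- The support of a flow. -/
def supp (f : G.E → ZMod 2 × ZMod 2) : Set G.E := {e | f e ≠ 0}

/-- Contraction of the edge set `C`: delete the edges of `C` and identify the
ends of each edge of `C`. -/
def contract (C : Set G.E) : Multigraph where
  V := Quot fun u w : G.V => ∃ e ∈ C, G.ends e = s(u, w)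
  E := {e : G.E // e ∉ C}
  finV := Finite.of_surjective _ (Quot.mk_surjective)
  finE := inferInstance
  ends := fun e => (G.ends e.1).map (Quot.mk _)

/-- A path: all vertices distinct (hence all edges distinct, which we also require). -/
def Walk.IsPath {n : ℕ} (W : G.Walk n) : Prop :=
  Function.Injective W.vtx ∧ Function.Injective W.edge

/-- A nontrivial path all of whose internal vertices have degree `2` in `G`. -/
def IsDeg2Path {n : ℕ} (W : G.Walk n) : Prop :=
  1 ≤ n ∧ W.IsPath G ∧ ∀ i : Fin (n + 1), 0 < i.val → i.val < n → G.degree (W.vtx i) = 2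

/-- A thread of `G`: a maximal path all of whose internal vertices have degree `2`
in `G` (maximal: its edge set is not properly contained in the edge set of
another such path). -/
def IsThread {n : ℕ} (W : G.Walk n) : Prop :=
  G.IsDeg2Path W ∧ ∀ (m : ℕ) (Q : G.Walk m), G.IsDeg2Path Q →
    Set.range W.edge ⊆ Set.range Q.edge → Set.range Q.edge = Set.range W.edge

/-- A cycle cover: a (multi)collection of cycles covering every edge. -/
def IsCycleCover (𝒞 : Multiset (Set G.E)) : Prop :=
  (∀ S ∈ 𝒞, G.IsCycle S) ∧ ∀ e : G.E, ∃ S ∈ 𝒞, e ∈ S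

/-- The length of a cycle cover: the sum of the lengths of its cycles. -/
noncomputable def coverLength (𝒞 : Multiset (Set G.E)) : ℕ :=
  (𝒞.map Set.ncard).sum

/-- The minimum length of a cycle cover of `G`. -/
noncomputable def cc : ℕ :=
  sInf {L : ℕ | ∃ 𝒞 : Multiset (Set G.E), G.IsCycleCover 𝒞 ∧ G.coverLength 𝒞 = L}

/-- `G` is bridgeless: the ends of each edge `e` are still joined after deleting `e`. -/
def Bridgeless : Prop :=
  ∀ (e : G.E) (u w : G.V), G.ends e = s(u, w) → G.Reaches {e}ᶜ u w

/-- The connected component of the subgraph with edge set `S` containing the edge `e₀`. -/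
def component (S : Set G.E) (e₀ : G.E) : Set G.E :=
  {e ∈ S | ∃ u w : G.V, u ∈ G.ends e₀ ∧ w ∈ G.ends e ∧ G.Reaches S u w}

/-- `B` is a connected component of the subgraph with edge set `S`. -/
def IsComponent (S B : Set G.E) : Prop := ∃ e₀ ∈ S, B = G.component S e₀

/-- A `k`-flow: an orientation `D` (given by the tail/head pair of each edge)
together with an integer-valued function `f` with `|f e| < k`, conserved at
every vertex. -/
def IsIntFlow (k : ℕ) (D : G.E → G.V × G.V) (f : G.E → ℤ) : Prop :=
  (∀ e : G.E, s((D e).1, (D e).2) = G.ends e) ∧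
    (∀ e : G.E, |f e| < (k : ℤ)) ∧
    ∀ v : G.V, (∑ᶠ e ∈ {e : G.E | (D e).1 = v}, f e) =
      ∑ᶠ e ∈ {e : G.E | (D e).2 = v}, f e

end Multigraph


open Classical in
noncomputable instance instFintypeE (G : Multigraph) : Fintype G.E := Fintype.ofFinite _

open Classical in
lemma aux_even_degIn (G : Multigraph) (S : Set G.E) (v : G.V) :
    Even (G.degIn S v) ↔
      ∑ e : G.E, (if e ∈ S ∧ v ∈ G.ends e ∧ ¬(G.ends e).IsDiag then (1 : ZMod 2) else 0) = 0 := by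
  have h1 : Even (G.degIn S v) ↔
      Even (Nat.card {e : G.E // e ∈ S ∧ v ∈ G.ends e ∧ ¬ (G.ends e).IsDiag}) := by
    unfold Multigraph.degIn
    simp [parity_simps]
  rw [h1, Nat.card_eq_fintype_card, Fintype.card_subtype, Finset.card_filter,
    even_iff_two_dvd, ← ZMod.natCast_eq_zero_iff]
  push_cast
  rfl

open Classical in
/-- the flow condition as a `Finset.sum` over the whole edge set -/
lemma aux_flow_sum (G : Multigraph) (f : G.E → ZMod 2 × ZMod 2) (hf : G.IsFlow f) (v : G.V) :
    ∑ e : G.E, (if v ∈ G.ends e ∧ ¬(G.ends e).IsDiag then f e else 0) = 0 := by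
  have h := hf v
  rw [finsum_mem_eq_toFinset_sum] at h
  rw [← Finset.sum_filter] at *
  rw [← h]
  apply Finset.sum_congr _ (fun _ _ => rfl)
  ext e; simp

open Multigraph symmDiff in
open Classical in
/-- Let `F` be a cycle of `G` and `f` a `ℤ₂×ℤ₂`-flow with
`E(G) − E(F) ⊆ supp f`.  With `C₁ = E_{f=(0,1)} ∪ E_{f=(1,0)}`,
`C₂ = E_{f=(0,1)} ∪ E_{f=(1,1)}`, `C₃ = E_{f=(1,1)} ∪ E_{f=(1,0)}`, the family
`{C₁ Δ F, C₂ Δ F, C₃ Δ F}` is a cycle cover of `G` of length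
`2m − |E(F)| + 2|E_{f=(0,0)}(F)|`; each edge outside `F` is covered exactly
twice, each edge of `F ∩ supp f` exactly once, and each edge of
`E_{f=(0,0)}(F)` exactly three times. -/
theorem three_symmDiff_cover (G : Multigraph) (m : ℕ) (hm : m = Nat.card G.E)
    (F : Set G.E) (hF : G.IsCycle F)
    (f : G.E → ZMod 2 × ZMod 2) (hf : G.IsFlow f)
    (hsupp : ∀ e : G.E, e ∉ F → f e ≠ (0, 0))
    (C₁ C₂ C₃ D₁ D₂ D₃ : Set G.E)
    (hC₁ : C₁ = {e : G.E | f e = (0, 1)} ∪ {e : G.E | f e = (1, 0)})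
    (hC₂ : C₂ = {e : G.E | f e = (0, 1)} ∪ {e : G.E | f e = (1, 1)})
    (hC₃ : C₃ = {e : G.E | f e = (1, 1)} ∪ {e : G.E | f e = (1, 0)})
    (hD₁ : D₁ = C₁ ∆ F) (hD₂ : D₂ = C₂ ∆ F) (hD₃ : D₃ = C₃ ∆ F) :
    G.IsCycle D₁ ∧ G.IsCycle D₂ ∧ G.IsCycle D₃ ∧
    (∀ e : G.E, e ∈ D₁ ∪ D₂ ∪ D₃) ∧
    ((D₁.ncard : ℝ) + (D₂.ncard : ℝ) + (D₃.ncard : ℝ) =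
      2 * (m : ℝ) - (F.ncard : ℝ) + 2 * ({e ∈ F | f e = (0, 0)}.ncard : ℝ)) ∧
    (∀ e : G.E, e ∉ F →
      (if e ∈ D₁ then 1 else 0) + (if e ∈ D₂ then 1 else 0)
        + (if e ∈ D₃ then 1 else 0) = 2) ∧
    (∀ e ∈ F, f e ≠ (0, 0) →
      (if e ∈ D₁ then 1 else 0) + (if e ∈ D₂ then 1 else 0)
        + (if e ∈ D₃ then 1 else 0) = 1) ∧
    (∀ e ∈ F, f e = (0, 0) →
      (if e ∈ D₁ then 1 else 0) + (if e ∈ D₂ then 1 else 0)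
        + (if e ∈ D₃ then 1 else 0) = 3) := by
  classical
  subst hD₁ hD₂ hD₃ hC₁ hC₂ hC₃
  have h4 : ∀ x : ZMod 2 × ZMod 2,
      x = (0, 0) ∨ x = (0, 1) ∨ x = (1, 0) ∨ x = (1, 1) := by decide
  set P : G.V → G.E → Prop := fun v e => v ∈ G.ends e ∧ ¬(G.ends e).IsDiag with hP
  -- flow coordinate sums
  have hflow := aux_flow_sum G f hf
  have hflow1 : ∀ v, ∑ e : G.E, (if P v e then (f e).1 else 0) = 0 := by
    intro v
    have h := congrArg Prod.fst (hflow v)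
    rw [Prod.fst_sum] at h
    simpa [apply_ite Prod.fst] using h
  have hflow2 : ∀ v, ∑ e : G.E, (if P v e then (f e).2 else 0) = 0 := by
    intro v
    have h := congrArg Prod.snd (hflow v)
    rw [Prod.snd_sum] at h
    simpa [apply_ite Prod.snd] using h
  -- general: support of a coordinate flow is a cycle
  have hzero : ∀ x : ZMod 2, x ≠ 1 → x = 0 := by decide
  have hCcyc : ∀ (S : Set G.E) (g : G.E → ZMod 2),
      (∀ e, e ∈ S ↔ g e = 1) →
      (∀ v, ∑ e : G.E, (if P v e then g e else 0) = 0) → G.IsCycle S := by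
    intro S g hg hsum v
    rw [aux_even_degIn]
    have step : ∀ e : G.E, (if e ∈ S ∧ v ∈ G.ends e ∧ ¬(G.ends e).IsDiag then (1 : ZMod 2) else 0)
        = (if P v e then g e else 0) := by
      intro e
      by_cases hPe : v ∈ G.ends e ∧ ¬(G.ends e).IsDiag
      · rw [if_pos (show P v e from hPe)]
        by_cases hS : e ∈ S
        · rw [if_pos ⟨hS, hPe⟩, (hg e).1 hS]
        · rw [if_neg (fun h => hS h.1), hzero _ (fun h1 => hS ((hg e).2 h1))]
      · rw [if_neg (show ¬ P v e from hPe), if_neg (fun h => hPe h.2)]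
    rw [Finset.sum_congr rfl (fun e _ => step e), hsum v]
  have hgC₁ : ∀ e, e ∈ ({e : G.E | f e = (0, 1)} ∪ {e : G.E | f e = (1, 0)}) ↔ (f e).1 + (f e).2 = 1 := by
    intro e
    rcases h4 (f e) with h | h | h | h <;>
      simp (config := { decide := true }) [Set.mem_union, Set.mem_setOf_eq, h, Prod.ext_iff]
  have hgC₂ : ∀ e, e ∈ ({e : G.E | f e = (0, 1)} ∪ {e : G.E | f e = (1, 1)}) ↔ (f e).2 = 1 := by
    intro e
    rcases h4 (f e) with h | h | h | h <;>
      simp (config := { decide := true }) [Set.mem_union, Set.mem_setOf_eq, h, Prod.ext_iff]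
  have hgC₃ : ∀ e, e ∈ ({e : G.E | f e = (1, 1)} ∪ {e : G.E | f e = (1, 0)}) ↔ (f e).1 = 1 := by
    intro e
    rcases h4 (f e) with h | h | h | h <;>
      simp (config := { decide := true }) [Set.mem_union, Set.mem_setOf_eq, h, Prod.ext_iff]
  have hsplit : ∀ v, ∑ e : G.E, (if P v e then (f e).1 + (f e).2 else 0) = 0 := by
    intro v
    have : ∑ e : G.E, (if P v e then (f e).1 + (f e).2 else 0)
        = ∑ e : G.E, ((if P v e then (f e).1 else 0) + (if P v e then (f e).2 else 0)) := by
      apply Finset.sum_congr rfl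
      intro e _
      by_cases hPe : P v e
      · rw [if_pos hPe, if_pos hPe, if_pos hPe]
      · rw [if_neg hPe, if_neg hPe, if_neg hPe, add_zero]
    rw [this, Finset.sum_add_distrib, hflow1, hflow2, add_zero]
  have hcyc₁ : G.IsCycle ({e : G.E | f e = (0, 1)} ∪ {e : G.E | f e = (1, 0)}) :=
    hCcyc _ _ hgC₁ hsplit
  have hcyc₂ : G.IsCycle ({e : G.E | f e = (0, 1)} ∪ {e : G.E | f e = (1, 1)}) :=
    hCcyc _ _ hgC₂ hflow2
  have hcyc₃ : G.IsCycle ({e : G.E | f e = (1, 1)} ∪ {e : G.E | f e = (1, 0)}) :=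
    hCcyc _ _ hgC₃ hflow1
  -- symmetric difference of cycles is a cycle
  have hsym : ∀ A B : Set G.E, G.IsCycle A → G.IsCycle B → G.IsCycle (A ∆ B) := by
    intro A B hA hB v
    have hA' := (aux_even_degIn G A v).1 (hA v)
    have hB' := (aux_even_degIn G B v).1 (hB v)
    rw [aux_even_degIn]
    have hterm : ∀ e : G.E,
        (if e ∈ A ∆ B ∧ v ∈ G.ends e ∧ ¬(G.ends e).IsDiag then (1 : ZMod 2) else 0)
        = (if e ∈ A ∧ v ∈ G.ends e ∧ ¬(G.ends e).IsDiag then (1 : ZMod 2) else 0)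
          + (if e ∈ B ∧ v ∈ G.ends e ∧ ¬(G.ends e).IsDiag then (1 : ZMod 2) else 0) := by
      intro e
      by_cases h1 : e ∈ A <;> by_cases h2 : e ∈ B <;>
          by_cases hQ : v ∈ G.ends e ∧ ¬(G.ends e).IsDiag <;>
        simp (config := { decide := true }) [Set.mem_symmDiff, h1, h2, hQ]
    rw [Finset.sum_congr rfl (fun e _ => hterm e), Finset.sum_add_distrib, hA', hB', add_zero]
  have cnt : ∀ e : G.E,
      ((if e ∈ ({e : G.E | f e = (0, 1)} ∪ {e : G.E | f e = (1, 0)}) ∆ F then 1 else 0) : ℕ)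
        + (if e ∈ ({e : G.E | f e = (0, 1)} ∪ {e : G.E | f e = (1, 1)}) ∆ F then 1 else 0)
        + (if e ∈ ({e : G.E | f e = (1, 1)} ∪ {e : G.E | f e = (1, 0)}) ∆ F then 1 else 0)
      = if e ∈ F then (if f e = (0, 0) then 3 else 1) else 2 := by
    intro e
    by_cases heF : e ∈ F
    · rcases h4 (f e) with h | h | h | h <;>
        simp (config := { decide := true }) [Set.mem_symmDiff, Set.mem_union, Set.mem_setOf_eq,
          h, heF, Prod.ext_iff]
    · have hne := hsupp e heF
      rcases h4 (f e) with h | h | h | h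
      · exact absurd h hne
      all_goals
        simp (config := { decide := true }) [Set.mem_symmDiff, Set.mem_union, Set.mem_setOf_eq,
          h, heF, Prod.ext_iff]
  refine ⟨hsym _ _ hcyc₁ hF, hsym _ _ hcyc₂ hF, hsym _ _ hcyc₃ hF, ?_, ?_, ?_, ?_, ?_⟩
  · -- coverage
    intro e
    by_contra hcon
    simp only [Set.mem_union, not_or] at hcon
    obtain ⟨⟨h1, h2⟩, h3⟩ := hcon
    have hc := cnt e
    rw [if_neg h1, if_neg h2, if_neg h3] at hc
    split_ifs at hc <;> omega
  · -- length
    have hncard : ∀ S : Set G.E, S.ncard = ∑ e : G.E, (if e ∈ S then 1 else 0) := by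
      intro S
      rw [Set.ncard_eq_toFinset_card', show S.toFinset = Finset.univ.filter (· ∈ S) by ext; simp]
      exact Finset.card_filter _ _
    have key : ∀ e : G.E,
        ((if e ∈ ({e : G.E | f e = (0, 1)} ∪ {e : G.E | f e = (1, 0)}) ∆ F then 1 else 0) : ℕ)
          + (if e ∈ ({e : G.E | f e = (0, 1)} ∪ {e : G.E | f e = (1, 1)}) ∆ F then 1 else 0)
          + (if e ∈ ({e : G.E | f e = (1, 1)} ∪ {e : G.E | f e = (1, 0)}) ∆ F then 1 else 0)
          + (if e ∈ F then 1 else 0)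
        = 2 * 1 + 2 * (if e ∈ {e ∈ F | f e = (0, 0)} then 1 else 0) := by
      intro e
      have hc := cnt e
      have hms : e ∈ {e ∈ F | f e = (0, 0)} ↔ e ∈ F ∧ f e = (0, 0) := Iff.rfl
      by_cases heF : e ∈ F <;> by_cases h0 : f e = (0, 0)
      · rw [if_pos heF, if_pos h0] at hc
        rw [hc, if_pos heF, if_pos (hms.mpr ⟨heF, h0⟩)]
      · rw [if_pos heF, if_neg h0] at hc
        rw [hc, if_pos heF, if_neg (fun h => h0 (hms.mp h).2)]
      · exact absurd h0 (hsupp e heF)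
      · rw [if_neg heF] at hc
        rw [hc, if_neg heF, if_neg (fun h => heF (hms.mp h).1)]
    have hnat : (({e : G.E | f e = (0, 1)} ∪ {e : G.E | f e = (1, 0)}) ∆ F).ncard
        + (({e : G.E | f e = (0, 1)} ∪ {e : G.E | f e = (1, 1)}) ∆ F).ncard
        + (({e : G.E | f e = (1, 1)} ∪ {e : G.E | f e = (1, 0)}) ∆ F).ncard
        + F.ncard
        = 2 * Nat.card G.E + 2 * ({e ∈ F | f e = (0, 0)}).ncard := by
      rw [hncard, hncard, hncard, hncard, hncard]
      rw [Nat.card_eq_fintype_card, ← Finset.card_univ, Finset.card_eq_sum_ones]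
      rw [Finset.mul_sum, Finset.mul_sum, ← Finset.sum_add_distrib, ← Finset.sum_add_distrib,
        ← Finset.sum_add_distrib, ← Finset.sum_add_distrib]
      refine Finset.sum_congr rfl fun e _ => ?_
      convert key e using 2
      congr 1
      congr 1
    have hr := congrArg (fun n : ℕ => (n : ℝ)) hnat
    push_cast at hr
    rw [hm]
    linarith
  · -- e ∉ F
    intro e he
    have hc := cnt e
    rw [if_neg he] at hc
    exact hc
  · -- e ∈ F, f e ≠ 0
    intro e he hne
    have hc := cnt e
    rw [if_pos he, if_neg hne] at hc
    exact hc
  · -- e ∈ F, f e = 0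
    intro e he h0
    have hc := cnt e
    rw [if_pos he, if_pos h0] at hc
    exact hc
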